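/- Let r : [0,∞) → ℝ be strictly positive and continuously differentiable. Then the geometric mean failure rate satisfies G(t) = √(r(t)·r(0)) for all t > 0 if and only if there exists a constant k ∈ ℝ such that r(t) = r(0)·e^{kt} for all t ≥ 0 (equivalently r(t) = r(0)·(r(1)/r(0))^t, the failure rate of the truncated log-Weibull distribution). -/

import Mathlib

theorem GFR_sqrt_characterizes_truncated_logWeibull
    (r : ℝ → ℝ)
    (hsmooth : ContDiffOn ℝ 1 r (Set.Ici 0))
    (hpos : ∀ u ∈ Set.Ici (0 : ℝ), 0 < r u) :
    (∀ t > (0:ℝ),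
        Real.exp ((1 / t) * ∫ u in (0:ℝ)..t, Real.log (r u)) =
          Real.sqrt (r t * r 0)) ↔
      ∃ k : ℝ, ∀ t ∈ Set.Ici (0:ℝ), r t = r 0 * Real.exp (k * t) := by
  have hr0 : 0 < r 0 := hpos 0 (Set.mem_Ici.mpr le_rfl)
  set f : ℝ → ℝ := fun u => Real.log (r u) with hfdef
  have hrc : ContinuousOn r (Set.Ici 0) := hsmooth.continuousOn
  have hfc : ContinuousOn f (Set.Ici 0) := fun x hx =>
    (Real.continuousAt_log (hpos x hx).ne').comp_continuousWithinAt (hrc x hx)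
  constructor
  · intro h
    -- rewrite hypothesis: ∫₀ᵗ f = t * (f t + f 0) / 2
    have heq : ∀ t > (0:ℝ), (∫ u in (0:ℝ)..t, f u) = t * (f t + f 0) / 2 := by
      intro t ht
      have hpt : 0 < r t * r 0 := mul_pos (hpos t ht.le) hr0
      have h1 := h t ht
      have h2 : (1 / t) * ∫ u in (0:ℝ)..t, f u = Real.log (Real.sqrt (r t * r 0)) := by
        rw [← h1, Real.log_exp]
      rw [Real.log_sqrt hpt.le, Real.log_mul (hpos t ht.le).ne' hr0.ne'] at h2
      have ht' : t ≠ 0 := ht.ne'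
      field_simp at h2 ⊢
      linarith [h2]
    -- derivative identity: f t - f 0 = t * D for the derivative D of f at t
    have key : ∀ t ∈ Set.Ioi (0:ℝ), ∃ D : ℝ, HasDerivAt f D t ∧ f t - f 0 = t * D := by
      intro t ht
      have ht : (0:ℝ) < t := ht
      have hmem : Set.Ici (0:ℝ) ∈ nhds t := Ici_mem_nhds ht
      have hrd : DifferentiableAt ℝ r t :=
        ((hsmooth.differentiableOn one_ne_zero) t ht.le).differentiableAt hmem
      have hfd : HasDerivAt f (deriv r t / r t) t :=
        hrd.hasDerivAt.log (hpos t ht.le).ne'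
      -- FTC derivative of the integral
      have hmeas : StronglyMeasurableAtFilter f (nhds t) MeasureTheory.volume :=
        (hfc.mono (Set.Ioi_subset_Ici le_rfl)).stronglyMeasurableAtFilter isOpen_Ioi t ht
      have hint : IntervalIntegrable f MeasureTheory.volume 0 t := by
        apply ContinuousOn.intervalIntegrable
        apply hfc.mono
        rw [Set.uIcc_of_le ht.le]
        exact Set.Icc_subset_Ici_self
      have hF : HasDerivAt (fun u => ∫ x in (0:ℝ)..u, f x) (f t) t :=
        intervalIntegral.integral_hasDerivAt_right hint hmeas
          ((hfc t ht.le).continuousAt hmem)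
      -- derivative of the right-hand side
      have hG : HasDerivAt (fun u => u * (f u + f 0) / 2)
          ((1 * (f t + f 0) + t * (deriv r t / r t)) / 2) t := by
        have := ((hasDerivAt_id t).mul (hfd.add_const (f 0))).div_const 2
        simpa using this
      -- the two functions agree near t
      have hev : (fun u => ∫ x in (0:ℝ)..u, f x) =ᶠ[nhds t]
          (fun u => u * (f u + f 0) / 2) := by
        filter_upwards [IsOpen.mem_nhds isOpen_Ioi ht] with u hu
        exact heq u hu
      have hF' : HasDerivAt (fun u => u * (f u + f 0) / 2) (f t) t := hF.congr_of_eventuallyEq hev.symm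
      have huniq : f t = (1 * (f t + f 0) + t * (deriv r t / r t)) / 2 :=
        hF'.unique hG
      exact ⟨deriv r t / r t, hfd, by linarith [huniq]⟩
    -- the quotient (f t - f 0) / t is constant on (0, ∞)
    set φ : ℝ → ℝ := fun u => (f u - f 0) / u with hφdef
    have hφ : ∀ t ∈ Set.Ioi (0:ℝ), HasDerivAt φ 0 t := by
      intro t ht
      obtain ⟨D, hD, hDt⟩ := key t ht
      have ht : (0:ℝ) < t := ht
      have hnum : HasDerivAt (fun u => f u - f 0) D t := hD.sub_const (f 0)
      have hden : HasDerivAt (fun u : ℝ => u) 1 t := hasDerivAt_id t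
      have := hnum.div hden ht.ne'
      have hzero : (D * t - (f t - f 0) * 1) / t ^ 2 = 0 := by
        rw [hDt]; ring
      rw [hzero] at this
      exact this
    have hconst : ∀ t > (0:ℝ), φ t = φ 1 := by
      intro t ht
      set a := min t 1 with ha
      set b := max t 1 with hb
      have ha0 : 0 < a := lt_min ht one_pos
      have hsub : Set.Icc a b ⊆ Set.Ioi (0:ℝ) := fun x hx => lt_of_lt_of_le ha0 hx.1
      have hcont : ContinuousOn φ (Set.Icc a b) := fun x hx =>
        ((hφ x (hsub hx)).continuousAt).continuousWithinAt
      have hder : ∀ x ∈ Set.Ico a b, HasDerivWithinAt φ 0 (Set.Ici x) x := fun x hx =>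
        (hφ x (hsub ⟨hx.1, hx.2.le⟩)).hasDerivWithinAt
      have := constant_of_has_deriv_right_zero hcont hder
      have h1 : φ t = φ a := this t ⟨min_le_left _ _, le_max_left _ _⟩
      have h2 : φ 1 = φ a := this 1 ⟨min_le_right _ _, le_max_right _ _⟩
      rw [h1, h2]
    refine ⟨f 1 - f 0, ?_⟩
    intro t ht
    rcases eq_or_lt_of_le (Set.mem_Ici.mp ht : (0:ℝ) ≤ t) with h0 | h0
    · rw [← h0]; simp
    · have := hconst t h0
      have hφ1 : φ 1 = f 1 - f 0 := by simp [hφdef]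
      have hφt : φ t = (f t - f 0) / t := rfl
      rw [hφt, hφ1] at this
      have hft : f t = f 0 + (f 1 - f 0) * t := by
        field_simp at this
        linarith [this]
      have : r t = Real.exp (f t) := (Real.exp_log (hpos t h0.le)).symm
      rw [this, hft, Real.exp_add, Real.exp_log hr0]
  · rintro ⟨k, hk⟩ t ht
    have hrt : r t = r 0 * Real.exp (k * t) := hk t ht.le
    have hI : (∫ u in (0:ℝ)..t, f u) = Real.log (r 0) * t + k * (t ^ 2 / 2) := by
      have hcong : (∫ u in (0:ℝ)..t, f u)
          = ∫ u in (0:ℝ)..t, (Real.log (r 0) + k * u) := by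
        apply intervalIntegral.integral_congr
        intro u hu
        rw [Set.uIcc_of_le ht.le] at hu
        have : r u = r 0 * Real.exp (k * u) := hk u hu.1
        simp only [hfdef]
        rw [this, Real.log_mul hr0.ne' (Real.exp_ne_zero _), Real.log_exp]
      rw [hcong, intervalIntegral.integral_add (intervalIntegrable_const)
        ((intervalIntegral.intervalIntegrable_id).const_mul k),
        intervalIntegral.integral_const, intervalIntegral.integral_const_mul,
        integral_id]
      simp [smul_eq_mul]
      ring
    rw [hI]
    have ht' : t ≠ 0 := ht.ne'
    have harg : (1 / t) * (Real.log (r 0) * t + k * (t ^ 2 / 2))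
        = Real.log (r 0) + k * t / 2 := by field_simp
    rw [harg, Real.exp_add, Real.exp_log hr0]
    have hsq : r t * r 0 = (r 0 * Real.exp (k * t / 2)) ^ 2 := by
      rw [hrt, show k * t = k * t / 2 + k * t / 2 by ring, Real.exp_add]
      ring
    rw [hsq, Real.sqrt_sq (by positivity)]
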